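/- The vector u = 1^d u_0 u_1 ... u_{⌈log d⌉−1} of length ℓ(d) = d⌈log d⌉ + d, where u_i is the length-d prefix of the periodic vector (1^{2^i} 0^{2^i})^d, is a d-auto-cyclic vector: for every 1 ≤ i ≤ d, d_H(u, 0^i u_1^{ℓ(d)−i}) ≥ d. -/

import Mathlib

/-- The length `ℓ(d) = d⌈log d⌉ + d` of the auto-cyclic vector. -/
def autoCyclicLen (d : ℕ) : ℕ := d * Nat.clog 2 d + d

/-- The vector `u = 1^d u_0 ⋯ u_{⌈log d⌉−1}` where `u_i` is the length-`d` prefix of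
`(1^{2^i} 0^{2^i})^d` (bit `j` of `u_i` is `1` iff `⌊j/2^i⌋` is even). -/
def autoCyclicVec (d : ℕ) : List Bool :=
  List.replicate d true ++
    (List.range (Nat.clog 2 d)).flatMap
      (fun i => List.ofFn (fun j : Fin d => decide (j.val / 2 ^ i % 2 = 0)))

/-- Hamming distance of two boolean lists (number of mismatching aligned positions). -/
def listHammingDist (x y : List Bool) : ℕ :=
  (x.zip y).countP (fun p => p.1 != p.2)

lemma aux_countP_eq_sum {α : Type*} (f : α → Bool) : ∀ (z : List α),
    z.countP f = ∑ p : Fin z.length, if f z[p] then 1 else 0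
  | [] => by simp
  | a :: t => by
    rw [List.countP_cons, aux_countP_eq_sum f t]
    simp only [List.length_cons]
    rw [Fin.sum_univ_succ]
    simp [Nat.add_comm]
    split_ifs <;> simp_all

lemma aux_card_le_hamming (x y : List Bool) (S : Finset ℕ)
    (h : ∀ p ∈ S, p < x.length ∧ p < y.length ∧ x.getD p false ≠ y.getD p false) :
    S.card ≤ listHammingDist x y := by
  unfold listHammingDist
  rw [aux_countP_eq_sum]
  have hS : ∀ m ∈ S, m < (x.zip y).length := by
    intro p hp
    rw [List.length_zip]
    exact lt_min (h p hp).1 (h p hp).2.1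
  rw [← Finset.card_attachFin S hS]
  calc (S.attachFin hS).card
      = ∑ p ∈ S.attachFin hS, (if (fun p => p.1 != p.2) (x.zip y)[p] then 1 else 0) := by
        rw [Finset.card_eq_sum_ones]
        refine Finset.sum_congr rfl fun p hp => ?_
        have hpS : p.val ∈ S := (Finset.mem_attachFin _).mp hp
        obtain ⟨hx, hy, hne⟩ := h p.val hpS
        have : (x.zip y)[p] = (x[p.val], y[p.val]) := List.getElem_zip ..
        rw [this]
        simp only [List.getD_eq_getElem _ _ hx, List.getD_eq_getElem _ _ hy] at hne
        simp [hne]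
    _ ≤ ∑ p : Fin (x.zip y).length, (if (fun p => p.1 != p.2) (x.zip y)[p] then 1 else 0) :=
        Finset.sum_le_sum_of_subset (Finset.subset_univ _)

lemma aux_flat_len (d c : ℕ) (g : ℕ → List Bool) (hg : ∀ k, (g k).length = d) :
    ((List.range c).flatMap g).length = c * d := by
  induction c with
  | zero => simp
  | succ n ih =>
    rw [List.range_succ, List.flatMap_append, List.length_append, ih]
    simp [hg, Nat.succ_mul]

lemma aux_flat_getD (d : ℕ) (g : ℕ → List Bool) (hg : ∀ k, (g k).length = d) :
    ∀ (c k j : ℕ), k < c → j < d →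
    ((List.range c).flatMap g).getD (k * d + j) false = (g k).getD j false := by
  intro c
  induction c with
  | zero => intro k j hk hj; omega
  | succ n ih =>
    intro k j hk hj
    rw [List.range_succ, List.flatMap_append]
    rcases Nat.lt_or_ge k n with h | h
    · have hlen : k * d + j < ((List.range n).flatMap g).length := by
        rw [aux_flat_len d n g hg]
        have h1 : (k + 1) * d ≤ n * d := Nat.mul_le_mul_right d h
        have h2 : k * d + d = (k + 1) * d := by ring
        omega
      rw [List.getD_append _ _ _ _ hlen]
      exact ih k j h hj
    · have hk' : n = k := by omega
      subst hk'
      rw [List.getD_append_right _ _ _ _ (by rw [aux_flat_len d n g hg]; omega)]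
      rw [aux_flat_len d n g hg]
      simp

lemma aux_u_len (d : ℕ) : (autoCyclicVec d).length = autoCyclicLen d := by
  unfold autoCyclicVec autoCyclicLen
  rw [List.length_append, List.length_replicate,
    aux_flat_len d _ _ (fun k => by simp)]
  ring

lemma aux_u_getD_lt (d p : ℕ) (hp : p < d) : (autoCyclicVec d).getD p false = true := by
  unfold autoCyclicVec
  rw [List.getD_append _ _ _ p (by simpa using hp)]
  rw [List.getD_eq_getElem _ _ (by simpa using hp)]
  simp

lemma aux_u_getD_block (d k j : ℕ) (hk : k < Nat.clog 2 d) (hj : j < d) :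
    (autoCyclicVec d).getD (d + (k * d + j)) false = decide (j / 2 ^ k % 2 = 0) := by
  unfold autoCyclicVec
  rw [List.getD_append_right _ _ _ _ (by simp)]
  simp only [List.length_replicate, Nat.add_sub_cancel_left]
  rw [aux_flat_getD d _ (fun k => by simp) _ k j hk hj]
  rw [List.getD_eq_getElem _ _ (by simpa using hj)]
  simp

/-- `u` is a `d`-auto-cyclic vector: for every `1 ≤ i ≤ d`,
`d_H(u, 0^i u_1^{ℓ(d)−i}) ≥ d`. -/
theorem autoCyclicVec_is_auto_cyclic (d : ℕ) (hd : 1 ≤ d) (i : ℕ) (h1 : 1 ≤ i) (h2 : i ≤ d) :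
    d ≤ listHammingDist (autoCyclicVec d)
      (List.replicate i false ++ (autoCyclicVec d).take (autoCyclicLen d - i)) := by
  have hLeq : autoCyclicLen d = d * Nat.clog 2 d + d := rfl
  have hdL : d ≤ autoCyclicLen d := by omega
  have hulen : (autoCyclicVec d).length = autoCyclicLen d := aux_u_len d
  have hvlen : (List.replicate i false ++
      (autoCyclicVec d).take (autoCyclicLen d - i)).length = autoCyclicLen d := by
    rw [List.length_append, List.length_replicate, List.length_take, hulen]
    omega
  have hvlow : ∀ p, p < i → (List.replicate i false ++
      (autoCyclicVec d).take (autoCyclicLen d - i)).getD p false = false := by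
    intro p hp
    rw [List.getD_append _ _ _ p (by simpa using hp)]
    rw [List.getD_eq_getElem _ _ (by simpa using hp)]
    simp
  have hvhigh : ∀ p, i ≤ p → p < autoCyclicLen d → (List.replicate i false ++
      (autoCyclicVec d).take (autoCyclicLen d - i)).getD p false
      = (autoCyclicVec d).getD (p - i) false := by
    intro p hip hpL
    rw [List.getD_append_right _ _ _ _ (by simpa using hip)]
    simp only [List.length_replicate]
    have hlt : p - i < ((autoCyclicVec d).take (autoCyclicLen d - i)).length := by
      rw [List.length_take, hulen]; omega
    rw [List.getD_eq_getElem _ _ hlt, List.getElem_take,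
      List.getD_eq_getElem _ _ (by rw [hulen]; omega)]
  rcases Nat.lt_or_ge i d with hid | hid
  · -- i < d : use block k = ν₂(i)
    obtain ⟨k, m, hm, him⟩ := Nat.exists_eq_two_pow_mul_odd (n := i) (by omega)
    have hm1 : 1 ≤ m := hm.pos
    have hpk : 0 < 2 ^ k := Nat.pow_pos (by norm_num)
    have hki : 2 ^ k ≤ i := by
      calc 2 ^ k = 2 ^ k * 1 := by ring
        _ ≤ 2 ^ k * m := Nat.mul_le_mul_left _ hm1
        _ = i := him.symm
    have hkc : k < Nat.clog 2 d := by
      have hdc : d ≤ 2 ^ Nat.clog 2 d := Nat.le_pow_clog (by norm_num) d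
      have : 2 ^ k < 2 ^ Nat.clog 2 d := by omega
      exact (Nat.pow_lt_pow_iff_right (by norm_num)).mp this
    have hcard : (Finset.range i ∪
        (Finset.Ico i d).image (fun j => d + (k * d + j))).card = d := by
      rw [Finset.card_union_of_disjoint, Finset.card_range,
        Finset.card_image_of_injective _ (fun a b hab => by omega), Nat.card_Ico]
      · omega
      · rw [Finset.disjoint_left]
        intro p hp hp'
        simp only [Finset.mem_range] at hp
        simp only [Finset.mem_image, Finset.mem_Ico] at hp'
        obtain ⟨j, hj, rfl⟩ := hp'
        omega
    refine le_trans (le_of_eq hcard.symm) (aux_card_le_hamming _ _ _ ?_)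
    intro p hp
    rw [hulen, hvlen]
    rw [Finset.mem_union] at hp
    rcases hp with hp | hp
    · simp only [Finset.mem_range] at hp
      refine ⟨by omega, by omega, ?_⟩
      rw [aux_u_getD_lt d p (by omega), hvlow p hp]
      simp
    · simp only [Finset.mem_image, Finset.mem_Ico] at hp
      obtain ⟨j, ⟨hij, hjd⟩, rfl⟩ := hp
      have hkd : k * d + d ≤ Nat.clog 2 d * d := by
        calc k * d + d = (k + 1) * d := by ring
          _ ≤ Nat.clog 2 d * d := Nat.mul_le_mul_right d hkc
      have hcd : d * Nat.clog 2 d = Nat.clog 2 d * d := Nat.mul_comm _ _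
      have hpL : d + (k * d + j) < autoCyclicLen d := by omega
      refine ⟨hpL, hpL, ?_⟩
      rw [aux_u_getD_block d k j hkc hjd, hvhigh _ (by omega) hpL]
      have hsub : d + (k * d + j) - i = d + (k * d + (j - i)) := by omega
      rw [hsub, aux_u_getD_block d k (j - i) hkc (by omega)]
      have hdiv1 : (j - i) / 2 ^ k = j / 2 ^ k - m := by
        rw [him]
        exact Nat.sub_mul_div j (2 ^ k) m
      have hdiv2 : m ≤ j / 2 ^ k := by
        rw [Nat.le_div_iff_mul_le hpk]
        calc m * 2 ^ k = 2 ^ k * m := Nat.mul_comm _ _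
          _ = i := him.symm
          _ ≤ j := hij
      obtain ⟨t, rfl⟩ := hm
      simp only [ne_eq, decide_eq_decide]
      omega
  · -- i = d : the first d positions suffice
    have hide : i = d := by omega
    have hcard : (Finset.range i).card = d := by simp [hide]
    refine le_trans (le_of_eq hcard.symm) (aux_card_le_hamming _ _ _ ?_)
    intro p hp
    simp only [Finset.mem_range] at hp
    rw [hulen, hvlen]
    refine ⟨by omega, by omega, ?_⟩
    rw [aux_u_getD_lt d p (by omega), hvlow p hp]
    simp
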